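/- Let ≼ be an inclusion-monotone preorder on Finset α and let C be a consistency predicate with C ∅. If a finite set G : Finset α has a unique subset repair H (a unique inclusion-maximal consistent subset of G), then H is also the unique ≼-preferred repair of G. -/
import Mathlib


/-- The strict part of a preference relation on finite databases. -/
def strictPart {α : Type*} [DecidableEq α] (r : Finset α → Finset α → Prop)
    (H H' : Finset α) : Prop :=
  r H H' ∧ ¬ r H' H

/-- `H` is a `r`-preferred repair of `G` with respect to consistency predicate `C`. -/
def PreferredRepair {α : Type*} [DecidableEq α] (r : Finset α → Finset α → Prop)
    (C : Finset α → Prop) (G H : Finset α) : Prop :=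
  C H ∧ H ⊆ G ∧ ¬ ∃ H'', H'' ⊆ G ∧ H'' ≠ H ∧ C H'' ∧ strictPart r H H''

/-- `H` is a subset repair of `G`: an inclusion-maximal consistent subset of `G`. -/
def SubsetRepair {α : Type*} [DecidableEq α] (C : Finset α → Prop)
    (G H : Finset α) : Prop :=
  C H ∧ H ⊆ G ∧ ¬ ∃ H'', C H'' ∧ H ⊂ H'' ∧ H'' ⊆ G

/-- A relation on finite sets is inclusion-monotone if strict inclusion implies
strict preference. -/
def InclMonotone {α : Type*} [DecidableEq α] (r : Finset α → Finset α → Prop) : Prop :=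
  ∀ H H' : Finset α, H ⊂ H' → strictPart r H H'

/-- Every consistent subset of `G` extends to a subset repair of `G`. -/
lemma exists_subsetRepair_superset {α : Type*} [DecidableEq α]
    (C : Finset α → Prop) (G X : Finset α) (hX : C X) (hXG : X ⊆ G) :
    ∃ M, SubsetRepair C G M ∧ X ⊆ M := by
  classical
  let S := G.powerset.filter (fun Y => C Y ∧ X ⊆ Y)
  have hXS : X ∈ S := by
    simp only [S, Finset.mem_filter, Finset.mem_powerset]
    exact ⟨hXG, hX, le_refl X⟩
  obtain ⟨M, hMS, hmax⟩ := S.exists_max_image (fun Y => Y.card) ⟨X, hXS⟩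
  simp only [S, Finset.mem_filter, Finset.mem_powerset] at hMS
  refine ⟨M, ⟨hMS.2.1, hMS.1, ?_⟩, hMS.2.2⟩
  rintro ⟨H'', hC'', hsub, hsubG⟩
  have hmem : H'' ∈ S := by
    simp only [S, Finset.mem_filter, Finset.mem_powerset]
    exact ⟨hsubG, hC'', hMS.2.2.trans hsub.subset⟩
  have := hmax H'' hmem
  exact absurd (Finset.card_lt_card hsub) (not_lt.mpr this)

theorem unique_subset_repair_is_unique_preferred_repair
    {α : Type*} [DecidableEq α] (r : Finset α → Finset α → Prop)
    (hrefl : ∀ H, r H H)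
    (htrans : ∀ H₁ H₂ H₃, r H₁ H₂ → r H₂ H₃ → r H₁ H₃)
    (hmono : InclMonotone r)
    (C : Finset α → Prop) (hC : C ∅) (G H : Finset α)
    (hH : SubsetRepair C G H)
    (huniq : ∀ H', SubsetRepair C G H' → H' = H) :
    PreferredRepair r C G H ∧ ∀ H', PreferredRepair r C G H' → H' = H := by
  have key : ∀ X, C X → X ⊆ G → X ⊆ H := by
    intro X hX hXG
    obtain ⟨M, hM, hXM⟩ := exists_subsetRepair_superset C G X hX hXG
    rw [huniq M hM] at hXM
    exact hXM
  constructor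
  · refine ⟨hH.1, hH.2.1, ?_⟩
    rintro ⟨H'', hsubG, hne, hC'', hs⟩
    have hss : H'' ⊂ H := (key H'' hC'' hsubG).ssubset_of_ne hne
    exact hs.2 (hmono _ _ hss).1
  · intro H' hH'
    by_contra hne
    have hss : H' ⊂ H := (key H' hH'.1 hH'.2.1).ssubset_of_ne hne
    exact hH'.2.2 ⟨H, hH.2.1, (ne_of_gt hss), hH.1, hmono _ _ hss⟩
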